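/- Let a_1,...,a_K, b_1,...,b_{K+1} be positive integers with Σ a_k = Σ b_l, and define f(x) = Σ_{k=1}^K floor(a_k x) - Σ_{l=1}^{K+1} floor(b_l x). Then f(x) ∈ {0, 1} for all real x if and only if u_n = (a_1 n)!···(a_K n)! / ((b_1 n)!···(b_{K+1} n)!) is an integer for all natural numbers n. -/

import Mathlib

open Finset

private lemma floor_neg_of_lt' {y : ℝ} (h : (⌊y⌋ : ℝ) < y) : ⌊-y⌋ = -⌊y⌋ - 1 := by
  rw [Int.floor_eq_iff]
  push_cast
  constructor
  · linarith [Int.lt_floor_add_one y]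
  · linarith

private lemma floor_nat_div' (m d : ℕ) : ⌊(m : ℝ) / (d : ℝ)⌋ = ((m / d : ℕ) : ℤ) := by
  rw [← Nat.floor_div_eq_div (K := ℝ) m d, Int.natCast_floor_eq_floor (by positivity)]

private lemma exists_delta' {ι : Type*} [Fintype ι] (c : ι → ℕ) (hc : ∀ j, 0 < c j) (x : ℝ) :
    ∃ δ : ℝ, 0 < δ ∧ ∀ t : ℝ, x ≤ t → t < x + δ →
      ∀ j, ⌊(c j : ℝ) * t⌋ = ⌊(c j : ℝ) * x⌋ := by
  classical
  set s : Finset ℝ :=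
    insert 1 (Finset.univ.image fun j => ((⌊(c j : ℝ) * x⌋ : ℝ) + 1) / (c j) - x) with hs_def
  have hs : s.Nonempty := ⟨1, Finset.mem_insert_self _ _⟩
  refine ⟨s.min' hs, ?_, ?_⟩
  · rw [Finset.lt_min'_iff]
    intro y hy
    rcases Finset.mem_insert.mp hy with rfl | hy
    · norm_num
    · obtain ⟨j, -, rfl⟩ := Finset.mem_image.mp hy
      have hcj : (0:ℝ) < c j := by exact_mod_cast hc j
      have := Int.lt_floor_add_one ((c j : ℝ) * x)
      rw [sub_pos, lt_div_iff₀ hcj]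
      linarith
  · intro t hxt htd j
    have hcj : (0:ℝ) < c j := by exact_mod_cast hc j
    have hmem : ((⌊(c j : ℝ) * x⌋ : ℝ) + 1) / (c j) - x ∈ s :=
      Finset.mem_insert_of_mem (Finset.mem_image.mpr ⟨j, Finset.mem_univ _, rfl⟩)
    have hle := Finset.min'_le s _ hmem
    rw [Int.floor_eq_iff]
    refine ⟨?_, ?_⟩
    · calc (⌊(c j:ℝ)*x⌋ : ℝ) ≤ (c j:ℝ)*x := Int.floor_le _
        _ ≤ (c j:ℝ)*t := by nlinarith
    · have ht' : t < ((⌊(c j : ℝ) * x⌋ : ℝ) + 1) / (c j) := by linarith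
      calc (c j:ℝ)*t < (c j:ℝ) * (((⌊(c j : ℝ) * x⌋ : ℝ) + 1) / (c j)) :=
            mul_lt_mul_of_pos_left ht' hcj
        _ = (⌊(c j : ℝ) * x⌋ : ℝ) + 1 := by field_simp

private lemma nonneg_imp_dvd' (K : ℕ) (a : Fin K → ℕ) (b : Fin (K+1) → ℕ)
    (hsum : (∑ k, a k) = (∑ l, b l))
    (hnn : ∀ x : ℝ, 0 ≤ (∑ k, ⌊(a k : ℝ) * x⌋) - (∑ l, ⌊(b l : ℝ) * x⌋)) (n : ℕ) :
    (∏ l, Nat.factorial (b l * n)) ∣ (∏ k, Nat.factorial (a k * n)) := by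
  have hA : (∏ k, Nat.factorial (a k * n)) ≠ 0 :=
    Finset.prod_ne_zero_iff.mpr fun k _ => (Nat.factorial_pos _).ne'
  have hB : (∏ l, Nat.factorial (b l * n)) ≠ 0 :=
    Finset.prod_ne_zero_iff.mpr fun l _ => (Nat.factorial_pos _).ne'
  rw [← Nat.factorization_le_iff_dvd hB hA, Finsupp.le_def]
  intro p
  by_cases hp : p.Prime
  · haveI : Fact p.Prime := ⟨hp⟩
    set M := (∑ k, a k) * n with hM
    set B := Nat.log p M + 1 with hBdef
    have hlog : ∀ m : ℕ, m ≤ M → Nat.log p m < B := fun m hm =>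
      Nat.lt_succ_of_le (Nat.log_mono_right hm)
    have hfact : ∀ m : ℕ, m ≤ M →
        (Nat.factorial m).factorization p = ∑ i ∈ Finset.Ico 1 B, m / p ^ i := by
      intro m hm
      rw [Nat.factorization_def _ hp]
      exact padicValNat_factorial (hlog m hm)
    have hak : ∀ k, a k * n ≤ M := fun k =>
      Nat.mul_le_mul_right n (Finset.single_le_sum (fun _ _ => Nat.zero_le _) (Finset.mem_univ k))
    have hbl : ∀ l, b l * n ≤ M := fun l => by
      rw [hM, hsum]
      exact Nat.mul_le_mul_right n
        (Finset.single_le_sum (fun _ _ => Nat.zero_le _) (Finset.mem_univ l))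
    rw [Nat.factorization_prod (fun k _ => (Nat.factorial_pos _).ne'),
        Nat.factorization_prod (fun l _ => (Nat.factorial_pos _).ne')]
    rw [Finset.sum_apply', Finset.sum_apply']
    calc ∑ l, ((b l * n).factorial.factorization) p
        = ∑ l, ∑ i ∈ Finset.Ico 1 B, (b l * n) / p ^ i := by
          exact Finset.sum_congr rfl fun l _ => hfact _ (hbl l)
      _ = ∑ i ∈ Finset.Ico 1 B, ∑ l, (b l * n) / p ^ i := Finset.sum_comm
      _ ≤ ∑ i ∈ Finset.Ico 1 B, ∑ k, (a k * n) / p ^ i := by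
          refine Finset.sum_le_sum fun i _ => ?_
          have hx := hnn ((n : ℝ) / (p : ℝ) ^ i)
          have hfl : ∀ c : ℕ, ⌊(c:ℝ) * ((n:ℝ)/(p:ℝ)^i)⌋ = ((c * n / p ^ i : ℕ) : ℤ) := by
            intro c
            have h1 : (c:ℝ) * ((n:ℝ)/(p:ℝ)^i) = ((c*n : ℕ) : ℝ) / ((p^i : ℕ) : ℝ) := by
              push_cast; ring
            rw [h1, floor_nat_div']
          simp only [hfl] at hx
          have := sub_nonneg.mp hx
          exact_mod_cast this
      _ = ∑ k, ∑ i ∈ Finset.Ico 1 B, (a k * n) / p ^ i := Finset.sum_comm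
      _ = ∑ k, ((a k * n).factorial.factorization) p := by
          exact Finset.sum_congr rfl fun k _ => (hfact _ (hak k)).symm
  · simp [Nat.factorization_eq_zero_of_not_prime _ hp]

private lemma periodic' (K : ℕ) (a : Fin K → ℕ) (b : Fin (K+1) → ℕ)
    (hsum : (∑ k, a k) = (∑ l, b l)) (x : ℝ) (m : ℤ) :
    (∑ k, ⌊(a k : ℝ) * (x + m)⌋) - (∑ l, ⌊(b l : ℝ) * (x + m)⌋)
      = (∑ k, ⌊(a k : ℝ) * x⌋) - (∑ l, ⌊(b l : ℝ) * x⌋) := by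
  have h1 : ∀ c : ℕ, ⌊(c:ℝ) * (x + m)⌋ = ⌊(c:ℝ)*x⌋ + c * m := by
    intro c
    have h : (c:ℝ) * (x + m) = (c:ℝ)*x + (((c : ℤ) * m : ℤ) : ℝ) := by push_cast; ring
    rw [h, Int.floor_add_intCast]
  simp only [h1, Finset.sum_add_distrib]
  have h2 : ∑ k, (a k : ℤ) * m = ∑ l, (b l : ℤ) * m := by
    rw [← Finset.sum_mul, ← Finset.sum_mul]
    congr 1
    exact_mod_cast congrArg (Nat.cast : ℕ → ℤ) hsum
  omega

private lemma dvd_imp_nonneg' (K : ℕ) (a : Fin K → ℕ) (b : Fin (K+1) → ℕ)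
    (ha : ∀ k, 0 < a k) (hb : ∀ l, 0 < b l)
    (hsum : (∑ k, a k) = (∑ l, b l))
    (hd : ∀ n : ℕ, (∏ l, Nat.factorial (b l * n)) ∣ (∏ k, Nat.factorial (a k * n)))
    (x : ℝ) :
    0 ≤ (∑ k, ⌊(a k : ℝ) * x⌋) - (∑ l, ⌊(b l : ℝ) * x⌋) := by
  -- reduce to y = fract x ∈ [0,1)
  set y : ℝ := Int.fract x with hy
  have hxy : x = y + ⌊x⌋ := by rw [hy]; rw [Int.fract]; ring
  rw [hxy, periodic' K a b hsum y ⌊x⌋]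
  have hy0 : 0 ≤ y := Int.fract_nonneg x
  have hy1 : y < 1 := Int.fract_lt_one x
  clear_value y
  clear hxy hy
  -- delta
  obtain ⟨δa, hδa, hta⟩ := exists_delta' a ha y
  obtain ⟨δb, hδb, htb⟩ := exists_delta' b hb y
  set δ : ℝ := min (min δa δb) (1 - y) with hδdef
  have hδ : 0 < δ := lt_min (lt_min hδa hδb) (by linarith)
  -- prime choice
  set S := ∑ l, b l with hS
  obtain ⟨p, hple, hp⟩ := Nat.exists_infinite_primes (max (S + 1) (⌈1/δ⌉₊ + 1))
  haveI : Fact p.Prime := ⟨hp⟩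
  have hpS : S < p := lt_of_lt_of_le (Nat.lt_succ_self S) (le_trans (le_max_left _ _) hple)
  have hpδ : 1 / δ < (p : ℝ) := by
    have h1 : (⌈1/δ⌉₊ + 1 : ℕ) ≤ p := le_trans (le_max_right _ _) hple
    have h2 : 1/δ ≤ (⌈1/δ⌉₊ : ℝ) := Nat.le_ceil _
    have h3 : ((⌈1/δ⌉₊ + 1 : ℕ) : ℝ) ≤ (p : ℝ) := by exact_mod_cast h1
    push_cast at h3
    linarith
  have hppos : (0:ℝ) < p := by exact_mod_cast hp.pos
  have hδp : 1 < (p : ℝ) * δ := by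
    rw [div_lt_iff₀ hδ] at hpδ; linarith
  set N : ℕ := ⌈(p : ℝ) * y⌉₊ with hN
  have hN1 : (p : ℝ) * y ≤ N := Nat.le_ceil _
  have hN2 : (N : ℝ) < (p : ℝ) * y + 1 := Nat.ceil_lt_add_one (by positivity)
  have hx1 : y ≤ (N : ℝ) / p := by rw [le_div_iff₀ hppos]; linarith
  have hx2 : (N : ℝ) / p < y + δ := by
    rw [div_lt_iff₀ hppos]
    nlinarith
  have hxlt1 : (N : ℝ) / p < 1 := by
    have : δ ≤ 1 - y := min_le_right _ _
    linarith
  have hNp : N < p := by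
    have : (N : ℝ) < p := by rw [div_lt_one hppos] at hxlt1; exact hxlt1
    exact_mod_cast this
  -- valuation inequality from divisibility at N
  have hA : (∏ k, Nat.factorial (a k * N)) ≠ 0 :=
    Finset.prod_ne_zero_iff.mpr fun k _ => (Nat.factorial_pos _).ne'
  have hB : (∏ l, Nat.factorial (b l * N)) ≠ 0 :=
    Finset.prod_ne_zero_iff.mpr fun l _ => (Nat.factorial_pos _).ne'
  have hval := (Nat.factorization_le_iff_dvd hB hA).mpr (hd N) p
  rw [Nat.factorization_prod (fun k _ => (Nat.factorial_pos _).ne'),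
      Nat.factorization_prod (fun l _ => (Nat.factorial_pos _).ne'),
      Finset.sum_apply', Finset.sum_apply'] at hval
  have hfact : ∀ c : ℕ, c ≤ S →
      (Nat.factorial (c * N)).factorization p = c * N / p := by
    intro c hc
    have hlt : c * N < p ^ 2 := by
      have h1 : c * N ≤ S * N := Nat.mul_le_mul_right N hc
      have h2 : S * N < p * p := by
        rcases Nat.eq_zero_or_pos N with h | h
        · simpa [h] using Nat.mul_pos hp.pos hp.pos
        · calc S * N < p * N := Nat.mul_lt_mul_of_lt_of_le hpS (le_refl N) h
            _ < p * p := Nat.mul_lt_mul_of_le_of_lt (le_refl p) hNp hp.pos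
      calc c * N ≤ S * N := h1
        _ < p * p := h2
        _ = p ^ 2 := (sq p).symm
    have hlog : Nat.log p (c * N) < 2 := by
      rcases Nat.eq_zero_or_pos (c * N) with h | h
      · simp [h]
      · exact Nat.log_lt_of_lt_pow h.ne' hlt
    rw [Nat.factorization_def _ hp, padicValNat_factorial hlog]
    have : Finset.Ico 1 2 = {1} := rfl
    rw [this, Finset.sum_singleton, pow_one]
  have hak : ∀ k, a k ≤ S := fun k => by
    rw [← hsum]
    exact Finset.single_le_sum (fun _ _ => Nat.zero_le _) (Finset.mem_univ k)
  have hbl : ∀ l, b l ≤ S := fun l => by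
    rw [hS]
    exact Finset.single_le_sum (fun _ _ => Nat.zero_le _) (Finset.mem_univ l)
  rw [Finset.sum_congr rfl (fun l _ => hfact _ (hbl l)),
      Finset.sum_congr rfl (fun k _ => hfact _ (hak k))] at hval
  -- translate floors
  have hfl : ∀ c : ℕ, ⌊(c:ℝ) * ((N:ℝ)/(p:ℝ))⌋ = ((c * N / p : ℕ) : ℤ) := by
    intro c
    have h1 : (c:ℝ) * ((N:ℝ)/(p:ℝ)) = ((c*N : ℕ) : ℝ) / ((p : ℕ) : ℝ) := by push_cast; ring
    rw [h1, floor_nat_div']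
  have hfla : ∀ k, ⌊(a k : ℝ) * y⌋ = ((a k * N / p : ℕ) : ℤ) := fun k => by
    rw [← hfl, ← (hta ((N:ℝ)/p) hx1 (by linarith [min_le_left (min δa δb) (1-y), min_le_left δa δb]) k)]
  have hflb : ∀ l, ⌊(b l : ℝ) * y⌋ = ((b l * N / p : ℕ) : ℤ) := fun l => by
    rw [← hfl, ← (htb ((N:ℝ)/p) hx1 (by linarith [min_le_left (min δa δb) (1-y), min_le_right δa δb]) l)]
  simp only [hfla, hflb]
  have : ((∑ l, b l * N / p : ℕ) : ℤ) ≤ ((∑ k, a k * N / p : ℕ) : ℤ) := by exact_mod_cast hval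
  push_cast at this ⊢
  linarith

theorem stmt_17 (K : ℕ) (a : Fin K → ℕ) (b : Fin (K + 1) → ℕ)
    (ha : ∀ k, 0 < a k) (hb : ∀ l, 0 < b l)
    (hsum : (∑ k, a k) = (∑ l, b l)) :
    (∀ x : ℝ, (∑ k, ⌊(a k : ℝ) * x⌋) - (∑ l, ⌊(b l : ℝ) * x⌋) = 0 ∨
              (∑ k, ⌊(a k : ℝ) * x⌋) - (∑ l, ⌊(b l : ℝ) * x⌋) = 1) ↔
    (∀ n : ℕ, (∏ l, Nat.factorial (b l * n)) ∣ (∏ k, Nat.factorial (a k * n))) := by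
  constructor
  · intro h n
    refine nonneg_imp_dvd' K a b hsum (fun x => ?_) n
    rcases h x with h0 | h1
    · omega
    · omega
  · intro hd x
    have hnn := dvd_imp_nonneg' K a b ha hb hsum hd
    obtain ⟨δa, hδa, hta⟩ := exists_delta' a ha x
    obtain ⟨δb, hδb, htb⟩ := exists_delta' b hb x
    set t : ℝ := x + min δa δb / 2 with ht
    have hmin : 0 < min δa δb := lt_min hδa hδb
    have htx : x < t := by rw [ht]; linarith
    have hta' : ∀ k, ⌊(a k : ℝ) * t⌋ = ⌊(a k : ℝ) * x⌋ := fun k =>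
      hta t htx.le (by rw [ht]; linarith [min_le_left δa δb]) k
    have htb' : ∀ l, ⌊(b l : ℝ) * t⌋ = ⌊(b l : ℝ) * x⌋ := fun l =>
      htb t htx.le (by rw [ht]; linarith [min_le_right δa δb]) l
    have hstrict : ∀ c : ℕ, 0 < c → ⌊(c:ℝ)*t⌋ = ⌊(c:ℝ)*x⌋ → ((⌊(c:ℝ)*t⌋ : ℝ) < (c:ℝ)*t) := by
      intro c hc heq
      have hc' : (0:ℝ) < c := by exact_mod_cast hc
      have h1 : (c:ℝ) * x < (c:ℝ) * t := mul_lt_mul_of_pos_left htx hc'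
      rw [heq]
      have := Int.floor_le ((c:ℝ)*x)
      linarith
    have hnegk : ∀ k, ⌊(a k : ℝ) * (-t)⌋ = -⌊(a k : ℝ) * t⌋ - 1 := by
      intro k
      rw [show (a k : ℝ) * (-t) = -((a k : ℝ) * t) by ring]
      exact floor_neg_of_lt' (hstrict _ (ha k) (hta' k))
    have hnegl : ∀ l, ⌊(b l : ℝ) * (-t)⌋ = -⌊(b l : ℝ) * t⌋ - 1 := by
      intro l
      rw [show (b l : ℝ) * (-t) = -((b l : ℝ) * t) by ring]
      exact floor_neg_of_lt' (hstrict _ (hb l) (htb' l))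
    have h1 := hnn t
    have h2 := hnn (-t)
    simp only [hta', htb'] at h1
    simp only [hnegk, hnegl, hta', htb'] at h2
    rw [Finset.sum_sub_distrib, Finset.sum_sub_distrib, Finset.sum_neg_distrib,
        Finset.sum_neg_distrib, Finset.sum_const, Finset.sum_const, Finset.card_univ,
        Finset.card_univ, Fintype.card_fin, Fintype.card_fin] at h2
    simp only [nsmul_eq_mul, mul_one] at h2
    push_cast at h2
    omega
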